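/- arXiv:2511.22393 — 2 statements merged into one kernel-verified Lean document; each statement's English description precedes it below -/
import Mathlib

section
/- Let K ⊆ ℝⁿ be a convex body, and let (t, x) ∈ ℝ × S^{n-1} be such that 0 < vol_n(K_{t,x}) < vol_n(K), where K_{s,y} = {z ∈ K : ⟨z, y⟩ ≥ s}. Then there exist a constant c > 0 and a neighborhood U of (t, x) in ℝ × S^{n-1} such that for all (s, y) ∈ U, the Hausdorff distance between the closure of the symmetric difference K_{t,x} Δ K_{s,y} and the section K ∩ H_{t,x} satisfies d_H(cl(K_{t,x} Δ K_{s,y}), K ∩ H_{t,x}) ≤ c‖x - y‖ + c|t - s|, where H_{t,x} = {z ∈ ℝⁿ : ⟨z, x⟩ = t}. -/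
open MeasureTheory RealInnerProductSpace

set_option maxHeartbeats 4000000

/-- **Lemma (Hausdorff-distance estimate for symmetric differences of caps).**
Let `K ⊆ ℝⁿ` be a convex body and `(t,x) ∈ ℝ × S^{n-1}` with
`0 < vol_n(K_{t,x}) < vol_n(K)`, where `K_{s,y} = {z ∈ K : ⟪z,y⟫ ≥ s}`.  Then
there exist `c > 0` and a neighborhood `U` of `(t,x)` such that for all
`(s,y) ∈ U` with `y` a unit vector,
`d_H(cl(K_{t,x} Δ K_{s,y}), K ∩ H_{t,x}) ≤ c‖x - y‖ + c|t - s|`,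
where `H_{t,x} = {z : ⟪z,x⟫ = t}`. -/
theorem hausdorffDist_symmDiff_caps
    (n : ℕ) (K : Set (EuclideanSpace ℝ (Fin n)))
    (hKconv : Convex ℝ K) (hKcomp : IsCompact K) (hKint : (interior K).Nonempty)
    (t : ℝ) (x : EuclideanSpace ℝ (Fin n)) (hx : ‖x‖ = 1)
    (h1 : 0 < volume {z ∈ K | t ≤ ⟪z, x⟫})
    (h2 : volume {z ∈ K | t ≤ ⟪z, x⟫} < volume K) :
    ∃ c : ℝ, 0 < c ∧ ∃ U ∈ nhds ((t, x) : ℝ × EuclideanSpace ℝ (Fin n)),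
      ∀ s : ℝ, ∀ y : EuclideanSpace ℝ (Fin n), (s, y) ∈ U → ‖y‖ = 1 →
        Metric.hausdorffDist
          (closure (({z ∈ K | t ≤ ⟪z, x⟫} \ {z ∈ K | s ≤ ⟪z, y⟫}) ∪
            ({z ∈ K | s ≤ ⟪z, y⟫} \ {z ∈ K | t ≤ ⟪z, x⟫})))
          (K ∩ {z | ⟪z, x⟫ = t})
        ≤ c * ‖x - y‖ + c * |t - s| := by
  classical
  obtain ⟨R₀, hR₀⟩ := isBounded_iff_forall_norm_le.1 hKcomp.isBounded
  obtain ⟨R, hRdef⟩ : ∃ R : ℝ, R = max R₀ 1 := ⟨_, rfl⟩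
  have hR1 : (1:ℝ) ≤ R := by rw [hRdef]; exact le_max_right _ _
  have hRpos : (0:ℝ) < R := by linarith
  have hRK : ∀ z ∈ K, ‖z‖ ≤ R := fun z hz => by
    rw [hRdef]; exact (hR₀ z hz).trans (le_max_left _ _)
  have hfr : volume (frontier K) = 0 := hKconv.addHaar_frontier volume
  have hKcl : IsClosed K := hKcomp.isClosed
  have hsubint : K \ frontier K ⊆ interior K := by
    intro z hz
    have := hKcl.frontier_eq
    rcases hz with ⟨hzK, hzf⟩
    by_contra h
    exact hzf (by rw [this]; exact ⟨hzK, h⟩)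
  have ha' : volume ({z ∈ K | t ≤ ⟪z, x⟫} \ frontier K) ≠ 0 := by
    rw [measure_diff_null hfr]; exact h1.ne'
  obtain ⟨a, haK', hax⟩ : ∃ a, a ∈ interior K ∧ t ≤ ⟪a, x⟫ := by
    obtain ⟨a, ⟨⟨haK, hax⟩, haf⟩⟩ := nonempty_of_measure_ne_zero ha'
    exact ⟨a, hsubint ⟨haK, haf⟩, hax⟩
  have hb' : volume ({z ∈ K | ⟪z, x⟫ < t} \ frontier K) ≠ 0 := by
    rw [measure_diff_null hfr]
    intro h0
    have hsub : K ⊆ {z ∈ K | t ≤ ⟪z, x⟫} ∪ {z ∈ K | ⟪z, x⟫ < t} := by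
      intro z hz; by_cases h : t ≤ ⟪z, x⟫
      · exact Or.inl ⟨hz, h⟩
      · exact Or.inr ⟨hz, not_le.1 h⟩
    have := (measure_mono hsub).trans (measure_union_le (μ := volume) _ _)
    rw [h0, add_zero] at this
    exact absurd this (not_le.2 h2)
  obtain ⟨b, hbK', hbx⟩ : ∃ b, b ∈ interior K ∧ ⟪b, x⟫ < t := by
    obtain ⟨b, ⟨⟨hbK, hbx⟩, hbf⟩⟩ := nonempty_of_measure_ne_zero hb'
    exact ⟨b, hsubint ⟨hbK, hbf⟩, hbx⟩
  obtain ⟨θ, hθdef⟩ : ∃ θ : ℝ, θ = (t - ⟪b, x⟫) / (⟪a, x⟫ - ⟪b, x⟫) := ⟨_, rfl⟩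
  have hab : (0:ℝ) < ⟪a, x⟫ - ⟪b, x⟫ := by linarith
  have hθ0 : 0 < θ := by rw [hθdef]; exact div_pos (by linarith) hab
  have hθ1 : θ ≤ 1 := by rw [hθdef, div_le_one hab]; linarith
  obtain ⟨m, hmdef⟩ : ∃ m : EuclideanSpace ℝ (Fin n), m = b + θ • (a - b) := ⟨_, rfl⟩
  have hm : m ∈ interior K := by
    rw [hmdef]; exact hKconv.interior.add_smul_sub_mem hbK' haK' ⟨hθ0.le, hθ1⟩
  have hkey : θ * (⟪a, x⟫ - ⟪b, x⟫) = t - ⟪b, x⟫ := by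
    rw [hθdef]; exact div_mul_cancel₀ _ hab.ne'
  have hmx : ⟪m, x⟫ = t := by
    rw [hmdef, inner_add_left, real_inner_smul_left, inner_sub_left]
    linarith
  clear hkey hθ0 hθ1 hab hθdef hb' ha' hax hbx h1 h2 hfr hmdef
  have hmK : m ∈ K := interior_subset hm
  have hmR : ‖m‖ ≤ R := hRK m hmK
  -- radius r
  obtain ⟨ρ, hρpos, hball⟩ := Metric.isOpen_iff.1 isOpen_interior m hm
  obtain ⟨r, hrdef⟩ : ∃ r : ℝ, r = min (ρ/4) 1 := ⟨_, rfl⟩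
  have hrpos : (0:ℝ) < r := by rw [hrdef]; exact lt_min (by linarith) one_pos
  have hr1 : r ≤ 1 := by rw [hrdef]; exact min_le_right _ _
  have hrR : r ≤ R := hr1.trans hR1
  have hball2 : Metric.closedBall m (2*r) ⊆ K := by
    intro z hz
    have h2r : 2*r ≤ ρ/2 := by
      have h := min_le_left (ρ/4) 1
      rw [hrdef]; linarith
    have hzm : dist z m < ρ := by
      have := Metric.mem_closedBall.1 hz
      linarith
    exact interior_subset (hball (Metric.mem_ball.2 hzm))
  have hxx : ⟪x, x⟫ = 1 := by rw [real_inner_self_eq_norm_sq, hx]; norm_num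
  have hq1K : m - r • x ∈ K := by
    apply hball2
    rw [Metric.mem_closedBall, dist_eq_norm]
    have h : m - r • x - m = -(r • x) := by abel
    rw [h, norm_neg, norm_smul, hx, Real.norm_eq_abs, abs_of_pos hrpos]
    linarith
  have hq2K : m + r • x ∈ K := by
    apply hball2
    rw [Metric.mem_closedBall, dist_eq_norm]
    have h : m + r • x - m = r • x := by abel
    rw [h, norm_smul, hx, Real.norm_eq_abs, abs_of_pos hrpos]
    linarith
  have hinner : ∀ (z q u : EuclideanSpace ℝ (Fin n)) (l : ℝ),
      ⟪z + l • (q - z), u⟫ = ⟪z, u⟫ + l * (⟪q, u⟫ - ⟪z, u⟫) := by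
    intro z q u l
    rw [inner_add_left, real_inner_smul_left, inner_sub_left]
  have hdistseg : ∀ (p q : EuclideanSpace ℝ (Fin n)) (l : ℝ), 0 ≤ l →
      dist p (p + l • (q - p)) = l * ‖q - p‖ := by
    intro p q l hl
    rw [dist_eq_norm]
    have h : p - (p + l • (q - p)) = -(l • (q - p)) := by abel
    rw [h, norm_neg, norm_smul, Real.norm_eq_abs, abs_of_nonneg hl]
  have hcpos : (0:ℝ) < 4*R^2/r := by
    apply div_pos _ hrpos
    nlinarith
  refine ⟨4*R^2/r, hcpos, Metric.ball ((t, x) : ℝ × EuclideanSpace ℝ (Fin n)) 4⁻¹,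
    Metric.ball_mem_nhds _ (by norm_num), ?_⟩
  intro s y hU hy
  have hxy4 : ‖x - y‖ < 4⁻¹ := by
    have h := Metric.mem_ball.1 hU
    rw [Prod.dist_eq] at h
    have h2 : dist y x < 4⁻¹ := lt_of_le_of_lt (le_max_right _ _) h
    rw [dist_eq_norm, ← norm_neg] at h2
    simpa using h2
  have hyy : ⟪y, y⟫ = 1 := by rw [real_inner_self_eq_norm_sq, hy]; norm_num
  obtain ⟨ε₀, hε₀def⟩ : ∃ e : ℝ, e = R * ‖x - y‖ + |t - s| := ⟨_, rfl⟩
  have hε₀0 : 0 ≤ ε₀ := by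
    rw [hε₀def]
    have := mul_nonneg hRpos.le (norm_nonneg (x - y))
    have := abs_nonneg (t - s)
    linarith
  have hB3 : 3*R*ε₀/r ≤ 4*R^2/r * ‖x - y‖ + 4*R^2/r * |t - s| := by
    rw [div_le_iff₀ hrpos]
    have heq : (4*R^2/r * ‖x - y‖ + 4*R^2/r * |t - s|) * r
        = 4*R^2*‖x-y‖ + 4*R^2*|t-s| := by
      field_simp
    rw [heq, hε₀def]
    nlinarith [norm_nonneg (x - y), abs_nonneg (t - s),
      mul_nonneg (mul_nonneg hRpos.le hRpos.le) (norm_nonneg (x - y)),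
      mul_nonneg hRpos.le (abs_nonneg (t - s))]
  have hBnn : (0:ℝ) ≤ 4*R^2/r * ‖x - y‖ + 4*R^2/r * |t - s| := by
    have := mul_nonneg hcpos.le (norm_nonneg (x - y))
    have := mul_nonneg hcpos.le (abs_nonneg (t - s))
    linarith
  have hCS : ∀ z ∈ K, |⟪z, x - y⟫| ≤ R * ‖x - y‖ := by
    intro z hz
    calc |⟪z, x - y⟫| ≤ ‖z‖ * ‖x - y‖ := abs_real_inner_le_norm _ _
      _ ≤ R * ‖x - y‖ := mul_le_mul_of_nonneg_right (hRK z hz) (norm_nonneg _)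
  apply Metric.hausdorffDist_le_of_infDist hBnn
  · -- points of closure Δ are close to the section
    have H1' : ∀ z ∈ (({z ∈ K | t ≤ ⟪z, x⟫} \ {z ∈ K | s ≤ ⟪z, y⟫}) ∪
        ({z ∈ K | s ≤ ⟪z, y⟫} \ {z ∈ K | t ≤ ⟪z, x⟫})),
        Metric.infDist z (K ∩ {z | ⟪z, x⟫ = t}) ≤ 4*R^2/r * ‖x - y‖ + 4*R^2/r * |t - s| := by
      rintro z (⟨⟨hzK, hzx⟩, hz2⟩ | ⟨⟨hzK, hzy⟩, hz1⟩)
      · -- type 1 : t ≤ ⟪z,x⟫, ⟪z,y⟫ < s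
        have hzy : ⟪z, y⟫ < s := not_le.1 fun h => hz2 ⟨hzK, h⟩
        obtain ⟨e, hedef⟩ : ∃ e : ℝ, e = ⟪z, x⟫ - t := ⟨_, rfl⟩
        have he0 : 0 ≤ e := by rw [hedef]; linarith
        have heε : e ≤ ε₀ := by
          have h3 : ⟪z, x - y⟫ ≤ R * ‖x - y‖ := (abs_le.1 (hCS z hzK)).2
          rw [inner_sub_right] at h3
          have h4 : s - t ≤ |t - s| := by rw [abs_sub_comm]; exact le_abs_self _
          rw [hedef, hε₀def]; linarith
        obtain ⟨l, hldef⟩ : ∃ l : ℝ, l = e / (e + r) := ⟨_, rfl⟩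
        have hl0 : 0 ≤ l := by rw [hldef]; exact div_nonneg he0 (by linarith)
        have hl1 : l ≤ 1 := by rw [hldef, div_le_one (by linarith)]; linarith
        have hlr : l ≤ ε₀ / r := by
          rw [hldef]; exact div_le_div₀ hε₀0 heε hrpos (by linarith)
        have hwK : z + l • ((m - r • x) - z) ∈ K :=
          hKconv.add_smul_sub_mem hzK hq1K ⟨hl0, hl1⟩
        have hq1x : ⟪m - r • x, x⟫ = t - r := by
          rw [inner_sub_left, real_inner_smul_left, hmx, hxx]; ring
        have hcancel : l * (e + r) = e := by
          rw [hldef]; exact div_mul_cancel₀ _ (by linarith : (0:ℝ) < e + r).ne'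
        have hwx : ⟪z + l • ((m - r • x) - z), x⟫ = t := by
          rw [hinner, hq1x]
          have h5 : ⟪z, x⟫ = t + e := by rw [hedef]; ring
          rw [h5]; linarith [hcancel]
        calc Metric.infDist z (K ∩ {z | ⟪z, x⟫ = t})
            ≤ dist z (z + l • ((m - r • x) - z)) :=
              Metric.infDist_le_dist_of_mem ⟨hwK, hwx⟩
          _ = l * ‖(m - r • x) - z‖ := hdistseg z _ l hl0
          _ ≤ (ε₀/r) * (3*R) := by
              apply mul_le_mul hlr ?_ (norm_nonneg _) (div_nonneg hε₀0 hrpos.le)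
              calc ‖(m - r • x) - z‖ ≤ ‖m - r • x‖ + ‖z‖ := norm_sub_le _ _
                _ ≤ (‖m‖ + ‖r • x‖) + ‖z‖ := by
                    have := norm_sub_le m (r • x); linarith
                _ ≤ 3*R := by
                    have h5 : ‖r • x‖ = r := by
                      rw [norm_smul, hx, Real.norm_eq_abs, abs_of_pos hrpos]; ring
                    have := hRK z hzK
                    linarith
          _ = 3*R*ε₀/r := by ring
          _ ≤ _ := hB3
      · -- type 2 : s ≤ ⟪z,y⟫, ⟪z,x⟫ < t
        have hzx : ⟪z, x⟫ < t := not_le.1 fun h => hz1 ⟨hzK, h⟩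
        obtain ⟨e, hedef⟩ : ∃ e : ℝ, e = t - ⟪z, x⟫ := ⟨_, rfl⟩
        have he0 : 0 ≤ e := by rw [hedef]; linarith
        have heε : e ≤ ε₀ := by
          have h3 : -(R * ‖x - y‖) ≤ ⟪z, x - y⟫ := (abs_le.1 (hCS z hzK)).1
          rw [inner_sub_right] at h3
          have h4 : t - s ≤ |t - s| := le_abs_self _
          rw [hedef, hε₀def]; linarith
        obtain ⟨l, hldef⟩ : ∃ l : ℝ, l = e / (e + r) := ⟨_, rfl⟩
        have hl0 : 0 ≤ l := by rw [hldef]; exact div_nonneg he0 (by linarith)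
        have hl1 : l ≤ 1 := by rw [hldef, div_le_one (by linarith)]; linarith
        have hlr : l ≤ ε₀ / r := by
          rw [hldef]; exact div_le_div₀ hε₀0 heε hrpos (by linarith)
        have hwK : z + l • ((m + r • x) - z) ∈ K :=
          hKconv.add_smul_sub_mem hzK hq2K ⟨hl0, hl1⟩
        have hq2x : ⟪m + r • x, x⟫ = t + r := by
          rw [inner_add_left, real_inner_smul_left, hmx, hxx]; ring
        have hcancel : l * (e + r) = e := by
          rw [hldef]; exact div_mul_cancel₀ _ (by linarith : (0:ℝ) < e + r).ne'
        have hwx : ⟪z + l • ((m + r • x) - z), x⟫ = t := by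
          rw [hinner, hq2x]
          have h5 : ⟪z, x⟫ = t - e := by rw [hedef]; ring
          rw [h5]; linarith [hcancel]
        calc Metric.infDist z (K ∩ {z | ⟪z, x⟫ = t})
            ≤ dist z (z + l • ((m + r • x) - z)) :=
              Metric.infDist_le_dist_of_mem ⟨hwK, hwx⟩
          _ = l * ‖(m + r • x) - z‖ := hdistseg z _ l hl0
          _ ≤ (ε₀/r) * (3*R) := by
              apply mul_le_mul hlr ?_ (norm_nonneg _) (div_nonneg hε₀0 hrpos.le)
              calc ‖(m + r • x) - z‖ ≤ ‖m + r • x‖ + ‖z‖ := norm_sub_le _ _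
                _ ≤ (‖m‖ + ‖r • x‖) + ‖z‖ := by
                    have := norm_add_le m (r • x); linarith
                _ ≤ 3*R := by
                    have h5 : ‖r • x‖ = r := by
                      rw [norm_smul, hx, Real.norm_eq_abs, abs_of_pos hrpos]; ring
                    have := hRK z hzK
                    linarith
          _ = 3*R*ε₀/r := by ring
          _ ≤ _ := hB3
    intro z hz
    have hcl : closure (({z ∈ K | t ≤ ⟪z, x⟫} \ {z ∈ K | s ≤ ⟪z, y⟫}) ∪
        ({z ∈ K | s ≤ ⟪z, y⟫} \ {z ∈ K | t ≤ ⟪z, x⟫})) ⊆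
        {z | Metric.infDist z (K ∩ {z | ⟪z, x⟫ = t}) ≤ 4*R^2/r * ‖x - y‖ + 4*R^2/r * |t - s|} :=
      closure_minimal H1' (isClosed_le (Metric.continuous_infDist_pt _) continuous_const)
    exact hcl hz
  · -- points of the section are close to closure Δ
    rintro p ⟨hpK, hpx⟩
    simp only [Set.mem_setOf_eq] at hpx
    rcases lt_trichotomy (⟪p, y⟫) s with hη | hη | hη
    · have hpΔ : p ∈ (({z ∈ K | t ≤ ⟪z, x⟫} \ {z ∈ K | s ≤ ⟪z, y⟫}) ∪
          ({z ∈ K | s ≤ ⟪z, y⟫} \ {z ∈ K | t ≤ ⟪z, x⟫})) :=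
        Or.inl ⟨⟨hpK, hpx.ge⟩, fun h => absurd h.2 (not_le.2 hη)⟩
      rw [Metric.infDist_zero_of_mem (subset_closure hpΔ)]
      exact hBnn
    · -- ⟪p,y⟫ = s
      by_cases hyx : y = x
      · have hst : s = t := by rw [hyx, hpx] at hη; exact hη.symm
        have hΔ : (({z ∈ K | t ≤ ⟪z, x⟫} \ {z ∈ K | s ≤ ⟪z, y⟫}) ∪
            ({z ∈ K | s ≤ ⟪z, y⟫} \ {z ∈ K | t ≤ ⟪z, x⟫})) = ∅ := by
          rw [hyx, hst]
          simp
        rw [hΔ, closure_empty, Metric.infDist_empty]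
        exact hBnn
      · have hxyne : x ≠ y := fun h => hyx h.symm
        have hnxy : 0 < ‖x - y‖ := norm_sub_pos_iff.2 hxyne
        have hsq : ‖x - y‖^2 = 2 - 2*⟪x, y⟫ := by
          rw [norm_sub_sq_real, hx, hy]; ring
        have hxy1 : ⟪x, y⟫ < 1 := by nlinarith
        have hxym1 : -1 < ⟪x, y⟫ := by nlinarith
        have hsq1 : ⟪x, y⟫^2 < 1 := by nlinarith
        have hwx' : ⟪x - ⟪x, y⟫ • y, x⟫ = 1 - ⟪x, y⟫^2 := by
          rw [inner_sub_left, real_inner_smul_left, hxx, real_inner_comm y x]; ring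
        have hwy' : ⟪x - ⟪x, y⟫ • y, y⟫ = 0 := by
          rw [inner_sub_left, real_inner_smul_left, hyy]; ring
        have hwnorm : ‖x - ⟪x, y⟫ • y‖ ≤ 2 := by
          calc ‖x - ⟪x, y⟫ • y‖ ≤ ‖x‖ + ‖⟪x, y⟫ • y‖ := norm_sub_le _ _
            _ ≤ 1 + 1 := by
                rw [hx, norm_smul, hy, Real.norm_eq_abs]
                have h : |⟪x, y⟫| ≤ 1 := by rw [abs_le]; constructor <;> linarith
                linarith
            _ = 2 := by norm_num
        have hmain : ∀ ε > 0, ∃ zz ∈ (({z ∈ K | t ≤ ⟪z, x⟫} \ {z ∈ K | s ≤ ⟪z, y⟫}) ∪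
            ({z ∈ K | s ≤ ⟪z, y⟫} \ {z ∈ K | t ≤ ⟪z, x⟫})), dist p zz < ε := by
          intro ε hε
          obtain ⟨l, hldef⟩ : ∃ l : ℝ, l = min 1 (ε / (5*R)) := ⟨_, rfl⟩
          have hl0 : 0 < l := by
            rw [hldef]; exact lt_min one_pos (div_pos hε (by linarith))
          have hl1 : l ≤ 1 := by rw [hldef]; exact min_le_left _ _
          have hlε : l * (4*R) < ε := by
            have h6 : l ≤ ε / (5*R) := by rw [hldef]; exact min_le_right _ _
            have h7 : l * (4*R) ≤ (ε / (5*R)) * (4*R) :=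
              mul_le_mul_of_nonneg_right h6 (by linarith)
            have h8 : (ε / (5*R)) * (4*R) = (4/5) * ε := by
              have h5R : (5:ℝ)*R ≠ 0 := (by linarith : (0:ℝ) < 5*R).ne'
              field_simp
            rw [h8] at h7
            linarith
          rcases le_or_gt 0 (⟪m, y⟫ - ⟪p, y⟫) with hμ | hμ
          · -- v = (-r) • w : type 2 point
            have hvK : m + (-r) • (x - ⟪x, y⟫ • y) ∈ K := by
              apply hball2
              rw [Metric.mem_closedBall, dist_eq_norm]
              have h9 : m + (-r) • (x - ⟪x, y⟫ • y) - m = (-r) • (x - ⟪x, y⟫ • y) := by abel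
              rw [h9, norm_smul, Real.norm_eq_abs, abs_of_neg (by linarith : -r < 0)]
              nlinarith
            have hvx : ⟪(-r) • (x - ⟪x, y⟫ • y), x⟫ = -r * (1 - ⟪x, y⟫^2) := by
              rw [real_inner_smul_left, hwx']
            have hvy : ⟪(-r) • (x - ⟪x, y⟫ • y), y⟫ = 0 := by
              rw [real_inner_smul_left, hwy']; ring
            have hzzK : p + l • ((m + (-r) • (x - ⟪x, y⟫ • y)) - p) ∈ K :=
              hKconv.add_smul_sub_mem hpK hvK ⟨hl0.le, hl1⟩
            have hzzx : ⟪p + l • ((m + (-r) • (x - ⟪x, y⟫ • y)) - p), x⟫ < t := by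
              rw [hinner, inner_add_left, hvx, hmx, hpx]
              have h9 : 0 < l * (r * (1 - ⟪x, y⟫^2)) := by
                apply mul_pos hl0; apply mul_pos hrpos; nlinarith
              nlinarith
            have hzzy : s ≤ ⟪p + l • ((m + (-r) • (x - ⟪x, y⟫ • y)) - p), y⟫ := by
              rw [hinner, inner_add_left, hvy, hη]
              nlinarith
            refine ⟨_, Or.inr ⟨⟨hzzK, hzzy⟩, fun h => absurd h.2 (not_le.2 hzzx)⟩, ?_⟩
            rw [hdistseg p _ l hl0.le]
            have h10 : ‖(m + (-r) • (x - ⟪x, y⟫ • y)) - p‖ ≤ 4*R := by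
              calc ‖(m + (-r) • (x - ⟪x, y⟫ • y)) - p‖
                  ≤ (‖m‖ + ‖(-r) • (x - ⟪x, y⟫ • y)‖) + ‖p‖ := by
                    have h11 := norm_sub_le (m + (-r) • (x - ⟪x, y⟫ • y)) p
                    have h12 := norm_add_le m ((-r) • (x - ⟪x, y⟫ • y))
                    linarith
                _ ≤ 4*R := by
                    have h11 : ‖(-r) • (x - ⟪x, y⟫ • y)‖ ≤ 2*r := by
                      rw [norm_smul, Real.norm_eq_abs, abs_of_neg (by linarith : -r < 0)]
                      nlinarith
                    have := hRK p hpK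
                    linarith
            calc l * ‖(m + (-r) • (x - ⟪x, y⟫ • y)) - p‖ ≤ l * (4*R) :=
                  mul_le_mul_of_nonneg_left h10 hl0.le
              _ < ε := hlε
          · -- v = r • w : type 1 point
            have hvK : m + r • (x - ⟪x, y⟫ • y) ∈ K := by
              apply hball2
              rw [Metric.mem_closedBall, dist_eq_norm]
              have h9 : m + r • (x - ⟪x, y⟫ • y) - m = r • (x - ⟪x, y⟫ • y) := by abel
              rw [h9, norm_smul, Real.norm_eq_abs, abs_of_pos hrpos]
              nlinarith
            have hvx : ⟪r • (x - ⟪x, y⟫ • y), x⟫ = r * (1 - ⟪x, y⟫^2) := by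
              rw [real_inner_smul_left, hwx']
            have hvy : ⟪r • (x - ⟪x, y⟫ • y), y⟫ = 0 := by
              rw [real_inner_smul_left, hwy']; ring
            have hzzK : p + l • ((m + r • (x - ⟪x, y⟫ • y)) - p) ∈ K :=
              hKconv.add_smul_sub_mem hpK hvK ⟨hl0.le, hl1⟩
            have hzzx : t ≤ ⟪p + l • ((m + r • (x - ⟪x, y⟫ • y)) - p), x⟫ := by
              rw [hinner, inner_add_left, hvx, hmx, hpx]
              have h9 : 0 ≤ l * (r * (1 - ⟪x, y⟫^2)) := by
                apply mul_nonneg hl0.le; apply mul_nonneg hrpos.le; nlinarith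
              nlinarith
            have hzzy : ⟪p + l • ((m + r • (x - ⟪x, y⟫ • y)) - p), y⟫ < s := by
              rw [hinner, inner_add_left, hvy, hη]
              nlinarith
            refine ⟨_, Or.inl ⟨⟨hzzK, hzzx⟩, fun h => absurd h.2 (not_le.2 hzzy)⟩, ?_⟩
            rw [hdistseg p _ l hl0.le]
            have h10 : ‖(m + r • (x - ⟪x, y⟫ • y)) - p‖ ≤ 4*R := by
              calc ‖(m + r • (x - ⟪x, y⟫ • y)) - p‖
                  ≤ (‖m‖ + ‖r • (x - ⟪x, y⟫ • y)‖) + ‖p‖ := by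
                    have h11 := norm_sub_le (m + r • (x - ⟪x, y⟫ • y)) p
                    have h12 := norm_add_le m (r • (x - ⟪x, y⟫ • y))
                    linarith
                _ ≤ 4*R := by
                    have h11 : ‖r • (x - ⟪x, y⟫ • y)‖ ≤ 2*r := by
                      rw [norm_smul, Real.norm_eq_abs, abs_of_pos hrpos]
                      nlinarith
                    have := hRK p hpK
                    linarith
            calc l * ‖(m + r • (x - ⟪x, y⟫ • y)) - p‖ ≤ l * (4*R) :=
                  mul_le_mul_of_nonneg_left h10 hl0.le
              _ < ε := hlε
        have hpcl : p ∈ closure (({z ∈ K | t ≤ ⟪z, x⟫} \ {z ∈ K | s ≤ ⟪z, y⟫}) ∪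
            ({z ∈ K | s ≤ ⟪z, y⟫} \ {z ∈ K | t ≤ ⟪z, x⟫})) := by
          rw [Metric.mem_closure_iff]
          exact hmain
        rw [Metric.infDist_zero_of_mem hpcl]
        exact hBnn
    · -- s < ⟪p,y⟫
      have hε₀pos : 0 < ε₀ := by
        rcases lt_or_eq_of_le hε₀0 with h | h
        · exact h
        · exfalso
          have hRn : 0 ≤ R * ‖x - y‖ := mul_nonneg hRpos.le (norm_nonneg (x - y))
          have habs : 0 ≤ |t - s| := abs_nonneg (t - s)
          have h1 : R * ‖x - y‖ = 0 := by rw [hε₀def] at h; linarith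
          have h2 : |t - s| = 0 := by rw [hε₀def] at h; linarith
          have hxy0 : ‖x - y‖ = 0 := by
            rcases mul_eq_zero.1 h1 with h' | h'
            · linarith
            · exact h'
          have hst : t = s := by have := abs_eq_zero.1 h2; linarith
          have hxyeq : x = y := norm_sub_eq_zero_iff.1 hxy0
          rw [← hxyeq, hpx, ← hst] at hη
          linarith
      obtain ⟨l, hldef⟩ : ∃ l : ℝ, l = min (⟪p, y⟫ - s) ε₀ / (r + 2*ε₀) := ⟨_, rfl⟩
      have hmin0 : 0 < min (⟪p, y⟫ - s) ε₀ := lt_min (by linarith) hε₀pos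
      have hl0 : 0 < l := by rw [hldef]; exact div_pos hmin0 (by linarith)
      have hl1 : l ≤ 1 := by
        rw [hldef, div_le_one (by linarith)]
        have := min_le_right (⟪p, y⟫ - s) ε₀
        linarith
      have hlcancel : l * (r + 2*ε₀) = min (⟪p, y⟫ - s) ε₀ := by
        rw [hldef]; exact div_mul_cancel₀ _ (by linarith : (0:ℝ) < r + 2*ε₀).ne'
      have hlε : l ≤ ε₀ / r := by
        rw [hldef]
        exact div_le_div₀ hε₀0 (min_le_right _ _) hrpos (by linarith)
      have hzzK : p + l • ((m - r • x) - p) ∈ K :=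
        hKconv.add_smul_sub_mem hpK hq1K ⟨hl0.le, hl1⟩
      have hq1x : ⟪m - r • x, x⟫ = t - r := by
        rw [inner_sub_left, real_inner_smul_left, hmx, hxx]; ring
      have hzzx : ⟪p + l • ((m - r • x) - p), x⟫ < t := by
        rw [hinner, hq1x, hpx]
        have h9 : 0 < l * r := mul_pos hl0 hrpos
        nlinarith
      have hxyle : ⟪x, y⟫ ≤ 1 := by
        have := real_inner_le_norm x y
        rw [hx, hy] at this; linarith
      have hpmy : ⟪p, y⟫ - ⟪m, y⟫ ≤ 2*ε₀ := by
        have h12 : ⟪p, y⟫ - ⟪m, y⟫ = ⟪p - m, y - x⟫ := by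
          rw [inner_sub_right, inner_sub_left, inner_sub_left, hmx, hpx]; ring
        have h13 : |⟪p - m, y - x⟫| ≤ ‖p - m‖ * ‖y - x‖ := abs_real_inner_le_norm _ _
        have h14 : ‖p - m‖ ≤ 2*R := by
          have := norm_sub_le p m
          have := hRK p hpK
          linarith
        have h15 : ‖y - x‖ = ‖x - y‖ := by rw [← norm_neg]; congr 1; abel
        have h16 : ‖p - m‖ * ‖y - x‖ ≤ 2*R*‖x - y‖ := by
          rw [h15]
          exact mul_le_mul_of_nonneg_right h14 (norm_nonneg _)
        have h17 : 2*R*‖x - y‖ ≤ 2*ε₀ := by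
          rw [hε₀def]
          have := abs_nonneg (t - s)
          linarith
        have h18 := (abs_le.1 h13).2
        linarith [le_abs_self (⟪p - m, y - x⟫ : ℝ)]
      have hq1y : ⟪m - r • x, y⟫ = ⟪m, y⟫ - r * ⟪x, y⟫ := by
        rw [inner_sub_left, real_inner_smul_left]
      have hzzy : s ≤ ⟪p + l • ((m - r • x) - p), y⟫ := by
        rw [hinner, hq1y]
        have hD : ⟪p, y⟫ + r * ⟪x, y⟫ - ⟪m, y⟫ ≤ 2*ε₀ + r := by nlinarith
        have h18 : l * (⟪p, y⟫ + r * ⟪x, y⟫ - ⟪m, y⟫) ≤ l * (2*ε₀ + r) :=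
          mul_le_mul_of_nonneg_left hD hl0.le
        have h19 : l * (2*ε₀ + r) = min (⟪p, y⟫ - s) ε₀ := by rw [← hlcancel]; ring
        have h20 : min (⟪p, y⟫ - s) ε₀ ≤ ⟪p, y⟫ - s := min_le_left _ _
        nlinarith
      have hzzΔ : p + l • ((m - r • x) - p) ∈
          (({z ∈ K | t ≤ ⟪z, x⟫} \ {z ∈ K | s ≤ ⟪z, y⟫}) ∪
          ({z ∈ K | s ≤ ⟪z, y⟫} \ {z ∈ K | t ≤ ⟪z, x⟫})) :=
        Or.inr ⟨⟨hzzK, hzzy⟩, fun h => absurd h.2 (not_le.2 hzzx)⟩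
      calc Metric.infDist p (closure (({z ∈ K | t ≤ ⟪z, x⟫} \ {z ∈ K | s ≤ ⟪z, y⟫}) ∪
            ({z ∈ K | s ≤ ⟪z, y⟫} \ {z ∈ K | t ≤ ⟪z, x⟫})))
          ≤ dist p (p + l • ((m - r • x) - p)) :=
            Metric.infDist_le_dist_of_mem (subset_closure hzzΔ)
        _ = l * ‖(m - r • x) - p‖ := hdistseg p _ l hl0.le
        _ ≤ (ε₀/r) * (3*R) := by
            apply mul_le_mul hlε ?_ (norm_nonneg _) (div_nonneg hε₀0 hrpos.le)
            calc ‖(m - r • x) - p‖ ≤ ‖m - r • x‖ + ‖p‖ := norm_sub_le _ _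
              _ ≤ (‖m‖ + ‖r • x‖) + ‖p‖ := by have := norm_sub_le m (r • x); linarith
              _ ≤ 3*R := by
                  have h5 : ‖r • x‖ = r := by
                    rw [norm_smul, hx, Real.norm_eq_abs, abs_of_pos hrpos]; ring
                  have := hRK p hpK
                  linarith
        _ = 3*R*ε₀/r := by ring
        _ ≤ _ := hB3
end

section
/- Let K ⊆ ℝⁿ be a convex body, and let (t, x) ∈ ℝ × S^{n-1} be such that 0 < vol_n({z ∈ K : ⟨z, x⟩ ≥ t}) < vol_n(K). Then there exist a constant c > 0 and a neighborhood U of (t, x) in ℝ × S^{n-1} such that for all (s, y) ∈ U, the Hausdorff distance between the sections K ∩ H_{t,x} and K ∩ H_{s,y} satisfies d_H(K ∩ H_{t,x}, K ∩ H_{s,y}) ≤ c‖x - y‖ + c|t - s|, where H_{s,y} = {z ∈ ℝⁿ : ⟨z, y⟩ = s}. -/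
open MeasureTheory RealInnerProductSpace


lemma hyperplane_volume_zero {n : ℕ} (x : EuclideanSpace ℝ (Fin n)) (hx : x ≠ 0) (t : ℝ) :
    volume {z : EuclideanSpace ℝ (Fin n) | ⟪z, x⟫ = t} = 0 := by
  have hxn : ‖x‖ ≠ 0 := norm_ne_zero_iff.mpr hx
  set S : Submodule ℝ (EuclideanSpace ℝ (Fin n)) := LinearMap.ker (innerSL ℝ x).toLinearMap with hS
  have hST : S ≠ ⊤ := by
    intro h
    have hxS : x ∈ S := h ▸ Submodule.mem_top
    have h0 : ⟪x, x⟫ = 0 := hxS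
    rw [real_inner_self_eq_norm_sq] at h0
    exact hxn (by nlinarith [norm_nonneg x])
  have hSvol : volume (S : Set (EuclideanSpace ℝ (Fin n))) = 0 :=
    Measure.addHaar_submodule volume S hST
  set c : EuclideanSpace ℝ (Fin n) := (t / ‖x‖ ^ 2) • x with hc
  have hcx : ⟪c, x⟫ = t := by
    have hx2 : ‖x‖ ^ 2 ≠ 0 := pow_ne_zero _ hxn
    rw [hc, real_inner_smul_left, real_inner_self_eq_norm_sq]
    field_simp
  have hmem : ∀ z : EuclideanSpace ℝ (Fin n), z ∈ S ↔ ⟪z, x⟫ = 0 := by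
    intro z
    rw [hS, LinearMap.mem_ker]
    constructor
    · intro h; rw [real_inner_comm]; exact h
    · intro h; show ⟪x, z⟫ = 0; rw [real_inner_comm]; exact h
  have hset : {z : EuclideanSpace ℝ (Fin n) | ⟪z, x⟫ = t}
      = (fun z => z + (-c)) ⁻¹' (S : Set (EuclideanSpace ℝ (Fin n))) := by
    ext z
    simp only [Set.mem_setOf_eq, Set.mem_preimage, SetLike.mem_coe, hmem, inner_add_left,
      inner_neg_left, hcx]
    constructor <;> intro h <;> linarith
  rw [hset, measure_preimage_add_right]
  exact hSvol


-- convex set is contained in a closed halfspace if its interior is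
lemma subset_halfspace_of_interior {n : ℕ} {K : Set (EuclideanSpace ℝ (Fin n))}
    (hK : Convex ℝ K) {w : EuclideanSpace ℝ (Fin n)} (hw : w ∈ interior K)
    {x : EuclideanSpace ℝ (Fin n)} {t : ℝ}
    (h : ∀ z ∈ interior K, ⟪z, x⟫ ≤ t) : ∀ p ∈ K, ⟪p, x⟫ ≤ t := by
  intro p hp
  have ha : ∀ m : ℕ, (0:ℝ) < 1 / (m + 1) := fun m => by positivity
  have hb : ∀ m : ℕ, (0:ℝ) ≤ 1 - 1 / (m + 1) := by
    intro m
    have : (1:ℝ) / (m+1) ≤ 1 := by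
      rw [div_le_one (by positivity)]; linarith [Nat.cast_nonneg (α := ℝ) m]
    linarith
  have hmem : ∀ m : ℕ, (1/(m+1:ℝ)) • w + (1 - 1/(m+1:ℝ)) • p ∈ interior K := fun m =>
    hK.combo_interior_self_mem_interior hw hp (ha m) (hb m) (by ring)
  have hle : ∀ m : ℕ, ⟪(1/(m+1:ℝ)) • w + (1 - 1/(m+1:ℝ)) • p, x⟫ ≤ t := fun m =>
    h _ (hmem m)
  have hval : ∀ m : ℕ, ⟪(1/(m+1:ℝ)) • w + (1 - 1/(m+1:ℝ)) • p, x⟫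
      = (1/(m+1:ℝ)) * ⟪w, x⟫ + (1 - 1/(m+1:ℝ)) * ⟪p, x⟫ := by
    intro m; rw [inner_add_left, real_inner_smul_left, real_inner_smul_left]
  have htend : Filter.Tendsto (fun m : ℕ => (1/(m+1:ℝ)) * ⟪w, x⟫ + (1 - 1/(m+1:ℝ)) * ⟪p, x⟫)
      Filter.atTop (nhds ⟪p, x⟫) := by
    have h0 : Filter.Tendsto (fun m : ℕ => 1/(m+1:ℝ)) Filter.atTop (nhds 0) :=
      tendsto_one_div_add_atTop_nhds_zero_nat
    have := ((h0.mul_const (⟪w, x⟫)).add (((tendsto_const_nhds (x := (1:ℝ))).sub h0).mul_const (⟪p, x⟫)))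
    simpa using this
  exact le_of_tendsto htend (Filter.Eventually.of_forall fun m => (hval m) ▸ hle m)


-- projection step: from any point of K one can reach the section K ∩ {⟪·,y⟫ = s}
lemma exists_near_section {n : ℕ} {K : Set (EuclideanSpace ℝ (Fin n))}
    (hK : Convex ℝ K) {M ρ : ℝ} (hρ : 0 < ρ) (hM : K ⊆ Metric.closedBall 0 M)
    {z y : EuclideanSpace ℝ (Fin n)} (hy : ‖y‖ = 1) {s : ℝ}
    (hball : Metric.closedBall z ρ ⊆ K) (hz : ⟪z, y⟫ = s)
    {p : EuclideanSpace ℝ (Fin n)} (hp : p ∈ K) :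
    ∃ q ∈ K, ⟪q, y⟫ = s ∧ dist p q ≤ (2 * M / ρ) * |⟪p, y⟫ - s| := by
  set f0 : ℝ := ⟪p, y⟫ - s with hf0
  set σ : ℝ := if 0 ≤ f0 then 1 else -1 with hσ
  have hσf : σ * |f0| = f0 := by
    rcases le_or_gt 0 f0 with h | h
    · rw [hσ, if_pos h, abs_of_nonneg h, one_mul]
    · rw [hσ, if_neg (not_le.mpr h), abs_of_neg h]; ring
  have hσ1 : |σ| = 1 := by
    rcases le_or_gt 0 f0 with h | h
    · rw [hσ, if_pos h]; simp
    · rw [hσ, if_neg (not_le.mpr h)]; simp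
  have hd : 0 < |f0| + ρ := by positivity
  set μ : ℝ := |f0| / (|f0| + ρ) with hμ
  have hμ0 : 0 ≤ μ := by positivity
  have hμ1 : μ ≤ 1 := by
    rw [hμ, div_le_one hd]; linarith
  set w : EuclideanSpace ℝ (Fin n) := z - (σ * ρ) • y with hw
  have hwK : w ∈ K := by
    apply hball
    rw [Metric.mem_closedBall, dist_eq_norm, hw]
    have : z - (σ * ρ) • y - z = -((σ * ρ) • y) := by abel
    rw [this, norm_neg, norm_smul, hy, mul_one, Real.norm_eq_abs, abs_mul, hσ1, one_mul,
      abs_of_pos hρ]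
  set q : EuclideanSpace ℝ (Fin n) := (1 - μ) • p + μ • w with hq
  have hqK : q ∈ K := hK hp hwK (by linarith) hμ0 (by ring)
  have hwy : ⟪w, y⟫ = s - σ * ρ := by
    rw [hw, inner_sub_left, real_inner_smul_left, hz, real_inner_self_eq_norm_sq, hy]
    ring
  have hkey : (1 - μ) * f0 = μ * (σ * ρ) := by
    rw [hμ]
    field_simp
    nlinarith [hσf]
  have hqy : ⟪q, y⟫ = s := by
    rw [hq, inner_add_left, real_inner_smul_left, real_inner_smul_left, hwy]
    have hpy : ⟪p, y⟫ = s + f0 := by rw [hf0]; ring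
    rw [hpy]; nlinarith [hkey]
  refine ⟨q, hqK, hqy, ?_⟩
  have hpq : p - q = μ • (p - w) := by
    rw [hq]
    module
  have hnorm : dist p q = μ * ‖p - w‖ := by
    rw [dist_eq_norm, hpq, norm_smul, Real.norm_eq_abs, abs_of_nonneg hμ0]
  have hpM : ‖p‖ ≤ M := by simpa using hM hp
  have hwM : ‖w‖ ≤ M := by simpa using hM hwK
  have hM0 : 0 ≤ M := le_trans (norm_nonneg p) hpM
  have h2M : ‖p - w‖ ≤ 2 * M := le_trans (norm_sub_le p w) (by linarith)
  have hμle : μ ≤ |f0| / ρ := by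
    rw [hμ]
    gcongr
    linarith [abs_nonneg f0]
  calc dist p q = μ * ‖p - w‖ := hnorm
    _ ≤ (|f0| / ρ) * (2 * M) := by
        apply mul_le_mul hμle h2M (norm_nonneg _) (by positivity)
    _ = (2 * M / ρ) * |f0| := by ring

/-- **Lemma (Hausdorff-distance estimate for sections).**  Let `K ⊆ ℝⁿ` be a
convex body and `(t,x) ∈ ℝ × S^{n-1}` with
`0 < vol_n {z ∈ K : ⟪z,x⟫ ≥ t} < vol_n K`.  Then there exist `c > 0` and a
neighborhood `U` of `(t,x)` such that for all `(s,y) ∈ U` with `y` a unit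
vector, `d_H(K ∩ H_{t,x}, K ∩ H_{s,y}) ≤ c‖x - y‖ + c|t - s|`, where
`H_{s,y} = {z : ⟪z,y⟫ = s}`. -/
theorem hausdorffDist_sections
    (n : ℕ) (K : Set (EuclideanSpace ℝ (Fin n)))
    (hKconv : Convex ℝ K) (hKcomp : IsCompact K) (hKint : (interior K).Nonempty)
    (t : ℝ) (x : EuclideanSpace ℝ (Fin n)) (hx : ‖x‖ = 1)
    (h1 : 0 < volume {z ∈ K | t ≤ ⟪z, x⟫})
    (h2 : volume {z ∈ K | t ≤ ⟪z, x⟫} < volume K) :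
    ∃ c : ℝ, 0 < c ∧ ∃ U ∈ nhds ((t, x) : ℝ × EuclideanSpace ℝ (Fin n)),
      ∀ s : ℝ, ∀ y : EuclideanSpace ℝ (Fin n), (s, y) ∈ U → ‖y‖ = 1 →
        Metric.hausdorffDist (K ∩ {z | ⟪z, x⟫ = t}) (K ∩ {z | ⟪z, y⟫ = s})
          ≤ c * ‖x - y‖ + c * |t - s| := by
  obtain ⟨w0, hw0⟩ := hKint
  have hx0 : x ≠ 0 := by
    intro h; rw [h, norm_zero] at hx; norm_num at hx
  -- Step A : a point of the interior strictly above the hyperplane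
  have hA : ∃ a ∈ interior K, t < ⟪a, x⟫ := by
    by_contra hcon
    push_neg at hcon
    have hall : ∀ p ∈ K, ⟪p, x⟫ ≤ t := subset_halfspace_of_interior hKconv hw0 hcon
    have hsub : {z ∈ K | t ≤ ⟪z, x⟫} ⊆ {z : EuclideanSpace ℝ (Fin n) | ⟪z, x⟫ = t} := by
      rintro z ⟨hzK, hzt⟩
      exact le_antisymm (hall z hzK) hzt
    have := measure_mono (μ := volume) hsub
    rw [hyperplane_volume_zero x hx0 t] at this
    exact h1.ne' (le_zero_iff.mp this)
  -- Step B : a point of the interior strictly below the hyperplane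
  have hB : ∃ b ∈ interior K, ⟪b, x⟫ < t := by
    by_contra hcon
    push_neg at hcon
    have hcon' : ∀ z ∈ interior K, ⟪z, -x⟫ ≤ -t := by
      intro z hz; rw [inner_neg_right]; linarith [hcon z hz]
    have hall : ∀ p ∈ K, t ≤ ⟪p, x⟫ := by
      intro p hp
      have := subset_halfspace_of_interior hKconv hw0 hcon' p hp
      rw [inner_neg_right] at this; linarith
    have heq : {z ∈ K | t ≤ ⟪z, x⟫} = K := by
      ext z; constructor
      · rintro ⟨hz, _⟩; exact hz
      · intro hz; exact ⟨hz, hall z hz⟩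
    rw [heq] at h2
    exact lt_irrefl _ h2
  obtain ⟨a, haI, hat⟩ := hA
  obtain ⟨b, hbI, hbt⟩ := hB
  -- Step C : a point z₀ of the interior *on* the hyperplane (IVT)
  obtain ⟨lam, hlam01, hlamval⟩ :
      ∃ lam ∈ Set.Icc (0:ℝ) 1, (1 - lam) * ⟪b, x⟫ + lam * ⟪a, x⟫ = t := by
    have hcont : ContinuousOn (fun lam : ℝ => (1 - lam) * ⟪b, x⟫ + lam * ⟪a, x⟫)
        (Set.Icc 0 1) := (by fun_prop : Continuous _).continuousOn
    have hmem : t ∈ Set.Icc ((1 - (0:ℝ)) * ⟪b, x⟫ + 0 * ⟪a, x⟫)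
        ((1 - (1:ℝ)) * ⟪b, x⟫ + 1 * ⟪a, x⟫) := by
      simp only [one_mul, zero_mul, sub_zero, sub_self, zero_add, add_zero]
      exact ⟨hbt.le, hat.le⟩
    obtain ⟨lam, hl, hval⟩ := intermediate_value_Icc (by norm_num : (0:ℝ) ≤ 1) hcont hmem
    exact ⟨lam, hl, hval⟩
  set z₀ : EuclideanSpace ℝ (Fin n) := (1 - lam) • b + lam • a with hz₀def
  have hz₀I : z₀ ∈ interior K :=
    hKconv.interior hbI haI (by linarith [hlam01.2]) hlam01.1 (by ring)
  have hz₀K : z₀ ∈ K := interior_subset hz₀I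
  have hz₀x : ⟪z₀, x⟫ = t := by
    rw [hz₀def, inner_add_left, real_inner_smul_left, real_inner_smul_left]
    exact hlamval
  -- Step D : a closed ball around z₀ inside K
  obtain ⟨ε, hε, hεball⟩ := Metric.isOpen_iff.mp isOpen_interior z₀ hz₀I
  set r : ℝ := ε / 2 with hrdef
  have hr : 0 < r := by positivity
  have hball₀ : Metric.closedBall z₀ r ⊆ K :=
    (Metric.closedBall_subset_ball (by simp [hrdef]; linarith)).trans
      (hεball.trans interior_subset)
  -- Step E : bound on K
  obtain ⟨M₀, hM₀⟩ := hKcomp.isBounded.subset_closedBall 0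
  set M : ℝ := max M₀ 1 with hMdef
  have hM : K ⊆ Metric.closedBall 0 M :=
    hM₀.trans (Metric.closedBall_subset_closedBall (le_max_left _ _))
  have hM1 : (1:ℝ) ≤ M := le_max_right _ _
  have hM0 : (0:ℝ) < M := by linarith
  -- constants
  set c : ℝ := 4 * M * M / r + 4 * M / r + 1 with hcdef
  have hc : 0 < c := by positivity
  set δ : ℝ := r / (2 * (M + 1)) with hδdef
  have hδ : 0 < δ := by positivity
  refine ⟨c, hc, Metric.ball ((t, x)) δ, Metric.ball_mem_nhds _ hδ, ?_⟩
  intro s y hU hy1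
  rw [Metric.mem_ball, Prod.dist_eq, max_lt_iff] at hU
  have hst : |s - t| < δ := by rw [← Real.dist_eq]; exact hU.1
  have hxy : ‖y - x‖ < δ := by rw [← dist_eq_norm]; exact hU.2
  have hxy' : ‖x - y‖ = ‖y - x‖ := norm_sub_rev x y
  have hz₀M : ‖z₀‖ ≤ M := by simpa using hM hz₀K
  -- the translated center z₁ on the hyperplane H_{s,y}
  set z₁ : EuclideanSpace ℝ (Fin n) := z₀ + (s - ⟪z₀, y⟫) • y with hz₁def
  have hz₁y : ⟪z₁, y⟫ = s := by
    rw [hz₁def, inner_add_left, real_inner_smul_left, real_inner_self_eq_norm_sq, hy1]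
    ring
  have hz₁z₀ : ‖z₁ - z₀‖ ≤ r / 2 := by
    have h1' : z₁ - z₀ = (s - ⟪z₀, y⟫) • y := by rw [hz₁def]; abel
    rw [h1', norm_smul, Real.norm_eq_abs, hy1, mul_one]
    have h2' : s - ⟪z₀, y⟫ = (s - t) + ⟪z₀, x - y⟫ := by
      rw [inner_sub_right, hz₀x]; ring
    have h3' : |s - ⟪z₀, y⟫| ≤ |s - t| + ‖z₀‖ * ‖x - y‖ := by
      rw [h2']
      exact (abs_add_le _ _).trans (add_le_add le_rfl (abs_real_inner_le_norm _ _))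
    have h4' : ‖z₀‖ * ‖x - y‖ ≤ M * δ := by
      apply mul_le_mul hz₀M (by rw [hxy']; exact hxy.le) (norm_nonneg _) hM0.le
    have h5' : δ + M * δ = r / 2 := by rw [hδdef]; field_simp; ring
    linarith
  have hball₁ : Metric.closedBall z₁ (r / 2) ⊆ K := by
    intro u hu
    apply hball₀
    rw [Metric.mem_closedBall] at hu ⊢
    calc dist u z₀ ≤ dist u z₁ + dist z₁ z₀ := dist_triangle _ _ _
      _ ≤ r / 2 + r / 2 := add_le_add hu (by rw [dist_eq_norm]; exact hz₁z₀)
      _ = r := by ring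
  -- apply Hausdorff-distance criterion
  have hB0 : (0:ℝ) ≤ c * ‖x - y‖ + c * |t - s| := by positivity
  apply Metric.hausdorffDist_le_of_mem_dist hB0
  · rintro p ⟨hpK, hpx⟩
    obtain ⟨q, hqK, hqy, hqd⟩ := exists_near_section hKconv (by positivity : (0:ℝ) < r/2)
      hM hy1 hball₁ hz₁y hpK
    refine ⟨q, ⟨hqK, hqy⟩, ?_⟩
    have hpM : ‖p‖ ≤ M := by simpa using hM hpK
    have hfb : |⟪p, y⟫ - s| ≤ M * ‖x - y‖ + |t - s| := by
      have h2' : ⟪p, y⟫ - s = -⟪p, x - y⟫ + (t - s) := by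
        rw [inner_sub_right]
        have : ⟪p, x⟫ = t := hpx
        linarith
      rw [h2']
      refine (abs_add_le _ _).trans (add_le_add ?_ le_rfl)
      rw [abs_neg]
      exact (abs_real_inner_le_norm _ _).trans
        (mul_le_mul_of_nonneg_right hpM (norm_nonneg _))
    have hcoef : 2 * M / (r/2) = 4 * M / r := by field_simp; ring
    calc dist p q ≤ (2 * M / (r/2)) * |⟪p, y⟫ - s| := hqd
      _ = (4 * M / r) * |⟪p, y⟫ - s| := by rw [hcoef]
      _ ≤ (4 * M / r) * (M * ‖x - y‖ + |t - s|) := by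
          apply mul_le_mul_of_nonneg_left hfb (by positivity)
      _ = (4 * M * M / r) * ‖x - y‖ + (4 * M / r) * |t - s| := by ring
      _ ≤ c * ‖x - y‖ + c * |t - s| := by
          apply add_le_add
          · apply mul_le_mul_of_nonneg_right _ (norm_nonneg _)
            rw [hcdef]; have : 0 < 4 * M / r := by positivity
            linarith
          · apply mul_le_mul_of_nonneg_right _ (abs_nonneg _)
            rw [hcdef]; have : 0 < 4 * M * M / r := by positivity
            linarith
  · rintro q ⟨hqK, hqy⟩
    obtain ⟨p, hpK, hpx, hpd⟩ := exists_near_section hKconv hr hM hx hball₀ hz₀x hqK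
    refine ⟨p, ⟨hpK, hpx⟩, ?_⟩
    have hqM : ‖q‖ ≤ M := by simpa using hM hqK
    have hfb : |⟪q, x⟫ - t| ≤ M * ‖x - y‖ + |t - s| := by
      have h2' : ⟪q, x⟫ - t = ⟪q, x - y⟫ + (s - t) := by
        rw [inner_sub_right]
        have : ⟪q, y⟫ = s := hqy
        linarith
      rw [h2']
      refine (abs_add_le _ _).trans (add_le_add ?_ (by rw [abs_sub_comm]))
      exact (abs_real_inner_le_norm _ _).trans
        (mul_le_mul_of_nonneg_right hqM (norm_nonneg _))
    calc dist q p ≤ (2 * M / r) * |⟪q, x⟫ - t| := hpd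
      _ ≤ (2 * M / r) * (M * ‖x - y‖ + |t - s|) := by
          apply mul_le_mul_of_nonneg_left hfb (by positivity)
      _ = (2 * M * M / r) * ‖x - y‖ + (2 * M / r) * |t - s| := by ring
      _ ≤ c * ‖x - y‖ + c * |t - s| := by
          apply add_le_add
          · apply mul_le_mul_of_nonneg_right _ (norm_nonneg _)
            rw [hcdef]
            have h1' : 0 < 4 * M / r := by positivity
            have h2' : 2 * M * M / r ≤ 4 * M * M / r := by gcongr <;> linarith
            linarith
          · apply mul_le_mul_of_nonneg_right _ (abs_nonneg _)
            rw [hcdef]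
            have h1' : 0 < 4 * M * M / r := by positivity
            have h2' : 2 * M / r ≤ 4 * M / r := by gcongr <;> linarith
            linarith
end
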